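/- Fix ε ∈ (0, 1/2) and suppose α_n = n^{ε−1} for all n ≥ 1. Then the covariance recursion converges strictly slower than the optimal rate 1/n: there exists a constant c > 0 such that Σ_n ≽ c·n^{ε−1}·R for all n ≥ 1, where ≽ denotes the Loewner order (i.e., Σ_n − c n^{ε−1} R is positive semidefinite). -/

import Mathlib

open Matrix Finset

namespace RPF8

variable {d : ℕ}

lemma psd_smul {M : Matrix (Fin d) (Fin d) ℝ} (hM : M.PosSemidef) {c : ℝ} (hc : 0 ≤ c) :
    (c • M).PosSemidef := by
  refine posSemidef_iff_dotProduct_mulVec.mpr ⟨by rw [Matrix.IsHermitian, conjTranspose_smul, star_trivial, hM.1.eq], fun x => ?_⟩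
  rw [smul_mulVec, dotProduct_smul, smul_eq_mul]
  exact mul_nonneg hc ((posSemidef_iff_dotProduct_mulVec.mp hM).2 x)

lemma pd_smul {M : Matrix (Fin d) (Fin d) ℝ} (hM : M.PosDef) {c : ℝ} (hc : 0 < c) :
    (c • M).PosDef := by
  refine posDef_iff_dotProduct_mulVec.mpr ⟨by rw [Matrix.IsHermitian, conjTranspose_smul, star_trivial, hM.1.eq], fun x hx => ?_⟩
  rw [smul_mulVec, dotProduct_smul, smul_eq_mul]
  exact mul_pos hc ((posDef_iff_dotProduct_mulVec.mp hM).2 hx)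

lemma smul_inv_eq {c : ℝ} (hc : c ≠ 0) {A : Matrix (Fin d) (Fin d) ℝ} (hA : IsUnit A.det) :
    (c • A)⁻¹ = c⁻¹ • A⁻¹ := by
  apply Matrix.inv_eq_right_inv
  rw [Matrix.smul_mul, Matrix.mul_smul, smul_smul, Matrix.mul_nonsing_inv _ hA,
    mul_inv_cancel₀ hc, one_smul]

end RPF8

namespace RPF8

set_option maxHeartbeats 1000000 in
lemma invAnti {d : ℕ} {A B : Matrix (Fin d) (Fin d) ℝ} (hA : A.PosDef) (hB : B.PosDef)
    (h : (B - A).PosSemidef) : (A⁻¹ - B⁻¹).PosSemidef := by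
  have hAu : IsUnit A.det := isUnit_iff_ne_zero.mpr hA.det_pos.ne'
  have hBu : IsUnit B.det := isUnit_iff_ne_zero.mpr hB.det_pos.ne'
  have key : A⁻¹ - B⁻¹ = B⁻¹ * ((B - A) + (B - A) * A⁻¹ * (B - A)) * B⁻¹ := by
    have e1 : (B - A) * A⁻¹ = B * A⁻¹ - 1 := by
      rw [Matrix.sub_mul, Matrix.mul_nonsing_inv _ hAu]
    rw [e1, Matrix.sub_mul, Matrix.one_mul]
    have e2 : (B - A) + (B * A⁻¹ * (B - A) - (B - A)) = B * A⁻¹ * (B - A) := by abel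
    rw [e2, Matrix.mul_assoc B, Matrix.nonsing_inv_mul_cancel_left _ _ hBu,
      Matrix.mul_sub A⁻¹, Matrix.nonsing_inv_mul _ hAu, Matrix.sub_mul,
      Matrix.mul_nonsing_inv_cancel_right _ _ hBu, Matrix.one_mul]
  have hD : ((B - A) + (B - A) * A⁻¹ * (B - A)).PosSemidef := by
    have hDH : (B - A)ᴴ = B - A := (hB.isHermitian.sub hA.isHermitian).eq
    have h2 := hA.inv.posSemidef.conjTranspose_mul_mul_same (B - A)
    rw [hDH] at h2
    exact h.add h2
  have hBinvH : (B⁻¹)ᴴ = B⁻¹ := hB.inv.isHermitian.eq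
  have h3 := hD.mul_mul_conjTranspose_same B⁻¹
  rw [hBinvH] at h3
  rw [key]
  exact h3

lemma exists_upper {d : ℕ} (A : Matrix (Fin d) (Fin d) ℝ) (hA : A.IsHermitian) :
    ∃ K > 0, ((K : ℝ) • (1 : Matrix (Fin d) (Fin d) ℝ) - A).PosSemidef := by
  set T : ℝ := ∑ i, ∑ j, |A i j| with hT
  have hT0 : 0 ≤ T := Finset.sum_nonneg fun i _ => Finset.sum_nonneg fun j _ => abs_nonneg _
  refine ⟨T + 1, by positivity, posSemidef_iff_dotProduct_mulVec.mpr ⟨?_, fun x => ?_⟩⟩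
  · rw [Matrix.IsHermitian, conjTranspose_sub, conjTranspose_smul, star_trivial,
      conjTranspose_one, hA.eq]
  · rw [star_trivial, Matrix.sub_mulVec, dotProduct_sub, smul_mulVec,
      Matrix.one_mulVec, dotProduct_smul, smul_eq_mul]
    have hS : 0 ≤ x ⬝ᵥ x := by
      simp only [dotProduct]; exact Finset.sum_nonneg fun i _ => mul_self_nonneg _
    have hSi : ∀ i, x i * x i ≤ x ⬝ᵥ x := fun i => by
      simp only [dotProduct]
      exact Finset.single_le_sum (fun j _ => mul_self_nonneg (x j)) (Finset.mem_univ i)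
    have hbound : x ⬝ᵥ (A *ᵥ x) ≤ T * (x ⬝ᵥ x) := by
      have : x ⬝ᵥ (A *ᵥ x) = ∑ i, ∑ j, x i * (A i j * x j) := by
        simp only [dotProduct, Matrix.mulVec, Finset.mul_sum]
      rw [this, hT, Finset.sum_mul]
      refine Finset.sum_le_sum fun i _ => ?_
      rw [Finset.sum_mul]
      refine Finset.sum_le_sum fun j _ => ?_
      have h2 : x i * x j ≤ x ⬝ᵥ x := by nlinarith [hSi i, hSi j, sq_nonneg (x i - x j)]
      have h3 : -(x ⬝ᵥ x) ≤ x i * x j := by nlinarith [hSi i, hSi j, sq_nonneg (x i + x j)]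
      have heq : x i * (A i j * x j) = A i j * (x i * x j) := by ring
      rcases le_or_gt 0 (A i j) with h0 | h0
      · rw [heq, abs_of_nonneg h0]; exact mul_le_mul_of_nonneg_left h2 h0
      · rw [heq, abs_of_neg h0]
        nlinarith [mul_le_mul_of_nonpos_left h3 h0.le]
    nlinarith [hS, hbound]

lemma exists_lower {d : ℕ} (B : Matrix (Fin d) (Fin d) ℝ) (hB : B.PosDef) :
    ∃ c : ℝ, 0 < c ∧ (B - c • (1 : Matrix (Fin d) (Fin d) ℝ)).PosSemidef := by
  obtain ⟨K, hK, hpsd⟩ := exists_upper B⁻¹ hB.inv.isHermitian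
  have hone : ((K : ℝ) • (1 : Matrix (Fin d) (Fin d) ℝ)).PosDef := pd_smul Matrix.PosDef.one hK
  have := invAnti hB.inv hone (by simpa using hpsd)
  have hBu : IsUnit B.det := isUnit_iff_ne_zero.mpr hB.det_pos.ne'
  rw [Matrix.nonsing_inv_nonsing_inv _ hBu,
    smul_inv_eq hK.ne' (isUnit_iff_ne_zero.mpr (by simp)), inv_one] at this
  exact ⟨K⁻¹, inv_pos.mpr hK, this⟩

lemma exists_compare {d : ℕ} (A B : Matrix (Fin d) (Fin d) ℝ) (hA : A.IsHermitian)
    (hB : B.PosDef) : ∃ t : ℝ, 0 < t ∧ (t • B - A).PosSemidef := by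
  obtain ⟨K, hK, hKpsd⟩ := exists_upper A hA
  obtain ⟨c, hc, hcpsd⟩ := exists_lower B hB
  refine ⟨K / c, by positivity, ?_⟩
  have hsum := (psd_smul hcpsd (le_of_lt (by positivity : (0:ℝ) < K / c))).add hKpsd
  have heq : (K / c) • (B - c • (1 : Matrix (Fin d) (Fin d) ℝ)) +
      ((K : ℝ) • (1 : Matrix (Fin d) (Fin d) ℝ) - A) = (K / c) • B - A := by
    rw [smul_sub, smul_smul, div_mul_cancel₀ _ hc.ne']
    abel
  rwa [heq] at hsum

end RPF8

open RPF8 in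
/-- Sub-optimal rate: if `α_n = n^{ε-1}` with `ε ∈ (0,1/2)`, then the RPF covariance
remains bounded below as `Σ_n ≽ c n^{ε-1} R` (Loewner order) for some `c > 0`. -/
theorem stmt_8 {d : ℕ} (hd : 1 ≤ d)
    (R S0 : Matrix (Fin d) (Fin d) ℝ) (hR : R.PosDef) (hS0pd : S0.PosDef)
    (ε : ℝ) (hε0 : 0 < ε) (hε1 : ε < 1 / 2)
    (α : ℕ → ℝ) (hα0 : α 0 = 0)
    (hαdef : ∀ n : ℕ, 1 ≤ n → α n = (n : ℝ) ^ (ε - 1))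
    (S : ℕ → Matrix (Fin d) (Fin d) ℝ) (hS0 : S 0 = S0)
    (hrec : ∀ n, S (n + 1) = (1 + α (n + 1)) • (R * (R + S n)⁻¹ * S n)) :
    ∃ c > 0, ∀ n : ℕ, 1 ≤ n → (S n - (c * (n : ℝ) ^ (ε - 1)) • R).PosSemidef := by
  classical
  have hα : ∀ n : ℕ, 0 < α (n + 1) := by
    intro n
    rw [hαdef (n + 1) (by omega)]
    exact Real.rpow_pos_of_pos (by positivity) _
  have hRu : IsUnit R.det := isUnit_iff_ne_zero.mpr hR.det_pos.ne'
  have hstep : ∀ n, (S n).PosDef →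
      (S (n + 1)).PosDef ∧ (S (n + 1))⁻¹ = (1 + α (n + 1))⁻¹ • ((S n)⁻¹ + R⁻¹) := by
    intro n hpd
    have hSu : IsUnit (S n).det := isUnit_iff_ne_zero.mpr hpd.det_pos.ne'
    have hsum : ((S n)⁻¹ + R⁻¹).PosDef := hpd.inv.add hR.inv
    have hsumu : IsUnit ((S n)⁻¹ + R⁻¹).det := isUnit_iff_ne_zero.mpr hsum.det_pos.ne'
    have h1a : (0:ℝ) < 1 + α (n + 1) := by linarith [hα n]
    have hmid : R * (R + S n)⁻¹ * S n = ((S n)⁻¹ + R⁻¹)⁻¹ := by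
      have e : (S n)⁻¹ + R⁻¹ = (S n)⁻¹ * (R + S n) * R⁻¹ := by
        rw [Matrix.mul_add, Matrix.nonsing_inv_mul _ hSu, Matrix.add_mul, Matrix.one_mul,
          Matrix.mul_nonsing_inv_cancel_right _ _ hRu]
      rw [e, Matrix.mul_inv_rev, Matrix.mul_inv_rev, Matrix.nonsing_inv_nonsing_inv _ hRu,
        Matrix.nonsing_inv_nonsing_inv _ hSu, ← Matrix.mul_assoc]
    have hform : S (n + 1) = (1 + α (n + 1)) • ((S n)⁻¹ + R⁻¹)⁻¹ := by rw [hrec n, hmid]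
    have hpd1 : (S (n + 1)).PosDef := by rw [hform]; exact pd_smul hsum.inv h1a
    refine ⟨hpd1, ?_⟩
    rw [hform, smul_inv_eq h1a.ne' (isUnit_iff_ne_zero.mpr hsum.inv.det_pos.ne'),
      Matrix.nonsing_inv_nonsing_inv _ hsumu]
  have hpd : ∀ n, (S n).PosDef := by
    intro n
    induction n with
    | zero => rwa [hS0]
    | succ n ih => exact (hstep n ih).1
  obtain ⟨t, ht, htpsd⟩ := exists_compare (S 0)⁻¹ R⁻¹ (hpd 0).inv.isHermitian hR.inv
  set C : ℝ := t + 1 with hC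
  have hC1 : (1:ℝ) ≤ C := by linarith
  have hC0 : (0:ℝ) < C := by linarith
  have main : ∀ n : ℕ, 1 ≤ n →
      ((C * (n : ℝ) ^ (1 - ε)) • R⁻¹ - (S n)⁻¹).PosSemidef := by
    intro n hn
    induction n with
    | zero => omega
    | succ n ih =>
      have hq := (hstep n (hpd n)).2
      have h1a : (0:ℝ) < 1 + α (n + 1) := by linarith [hα n]
      have hb0 : (0:ℝ) < (1 + α (n + 1))⁻¹ := inv_pos.mpr h1a
      have hb1 : (1 + α (n + 1))⁻¹ ≤ 1 := by
        rw [inv_le_one_iff₀]; right; linarith [hα n]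
      rcases Nat.eq_zero_or_pos n with hn0 | hn1
      · -- base case n = 0, proving claim at 1
        subst hn0
        have hcast : ((0 + 1 : ℕ) : ℝ) = 1 := by norm_num
        rw [hcast, Real.one_rpow, mul_one]
        rw [hq, hS0] at *
        have hsum : (S0⁻¹ + R⁻¹).PosDef := hS0pd.inv.add hR.inv
        have key : C • R⁻¹ - (1 + α (0 + 1))⁻¹ • (S0⁻¹ + R⁻¹) =
            (t • R⁻¹ - S0⁻¹) + (1 - (1 + α (0 + 1))⁻¹) • (S0⁻¹ + R⁻¹) := by
          rw [hC]; module
        rw [hq, key]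
        exact htpsd.add (psd_smul hsum.posSemidef (by linarith))
      · have ih' := ih hn1
        have hnpos : (0:ℝ) < (n:ℝ) := by exact_mod_cast hn1
        have hn1pos : (0:ℝ) < ((n:ℝ) + 1) := by linarith
        have hcast : ((n + 1 : ℕ) : ℝ) = (n : ℝ) + 1 := by push_cast; ring
        have ha : α (n + 1) = ((n:ℝ) + 1) ^ (ε - 1) := by
          rw [hαdef (n + 1) (by omega), hcast]
        have hab : α (n + 1) * ((n:ℝ) + 1) ^ (1 - ε) = 1 := by
          rw [ha, ← Real.rpow_add hn1pos]
          norm_num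
        set s : ℝ := C * ((n:ℝ) + 1) ^ (1 - ε) + C - C * (n:ℝ) ^ (1 - ε) - 1 with hs_def
        have hrpow_mono : (n:ℝ) ^ (1 - ε) ≤ ((n:ℝ) + 1) ^ (1 - ε) :=
          Real.rpow_le_rpow hnpos.le (by linarith) (by linarith)
        have hs : 0 ≤ s := by
          have := mul_le_mul_of_nonneg_left hrpow_mono hC0.le
          simp only [hs_def]; linarith
        have key : (C * ((n + 1 : ℕ) : ℝ) ^ (1 - ε)) • R⁻¹ -
            (1 + α (n + 1))⁻¹ • ((S n)⁻¹ + R⁻¹) =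
            (1 + α (n + 1))⁻¹ • (((C * (n:ℝ) ^ (1 - ε)) • R⁻¹ - (S n)⁻¹) + s • R⁻¹) := by
          rw [hcast]
          match_scalars
          · field_simp
            linear_combination C * hab
          · field_simp
        rw [hq, key]
        exact psd_smul (ih'.add (psd_smul hR.inv.posSemidef hs)) hb0.le
  refine ⟨C⁻¹, inv_pos.mpr hC0, fun n hn => ?_⟩
  have h := main n hn
  have hnpos : (0:ℝ) < (n:ℝ) := by exact_mod_cast hn
  have hpos : (0:ℝ) < C * (n:ℝ) ^ (1 - ε) := by positivity
  have hBpd : ((C * (n:ℝ) ^ (1 - ε)) • R⁻¹).PosDef := pd_smul hR.inv hpos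
  have h2 := invAnti (hpd n).inv hBpd h
  have hSu : IsUnit (S n).det := isUnit_iff_ne_zero.mpr (hpd n).det_pos.ne'
  have hRiu : IsUnit R⁻¹.det := isUnit_iff_ne_zero.mpr hR.inv.det_pos.ne'
  rw [Matrix.nonsing_inv_nonsing_inv _ hSu, smul_inv_eq hpos.ne' hRiu,
    Matrix.nonsing_inv_nonsing_inv _ hRu] at h2
  have hscal : (C * (n:ℝ) ^ (1 - ε))⁻¹ = C⁻¹ * (n:ℝ) ^ (ε - 1) := by
    rw [mul_inv, ← Real.rpow_neg hnpos.le]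
    norm_num
  rwa [hscal] at h2
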